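/- For any fixed reals a < b and any function f : ℝⁿ → ℝᵐ, the conjugated map T_{a,b}⁻¹ ∘ f ∘ T_{a,b} is normalization-equivariant on nonconstant inputs: defining g(x) = ((max(x) − min(x))/(b − a)) • (f(T_{a,b}(x)) − a•1ₘ) + min(x)•1ₘ, where T_{a,b}(x) = (b − a) • (x − min(x)•1ₙ)/(max(x) − min(x)) + a•1ₙ, one has g(λ•x + μ•1ₙ) = λ • g(x) + μ•1ₘ for every x ∈ ℝⁿ with max(x) > min(x), every real λ > 0 and every μ ∈ ℝ. -/
import Mathlib

/-- Largest coordinate of a vector of `ℝⁿ`, `n ≥ 1`. -/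
def vmax {n : ℕ} (hn : 0 < n) (x : Fin n → ℝ) : ℝ :=
  Finset.univ.sup' ⟨⟨0, hn⟩, Finset.mem_univ _⟩ x

/-- Smallest coordinate of a vector of `ℝⁿ`, `n ≥ 1`. -/
def vmin {n : ℕ} (hn : 0 < n) (x : Fin n → ℝ) : ℝ :=
  Finset.univ.inf' ⟨⟨0, hn⟩, Finset.mem_univ _⟩ x

/-- The min–max normalization map `T_{a,b}` sending `x` to
`(b - a) • (x - min(x)•1ₙ) / (max(x) - min(x)) + a•1ₙ`. -/
noncomputable def minMaxNormalize {n : ℕ} (hn : 0 < n) (a b : ℝ) (x : Fin n → ℝ) :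
    Fin n → ℝ :=
  fun i => (b - a) * (x i - vmin hn x) / (vmax hn x - vmin hn x) + a

/-- The conjugated map `T_{a,b}⁻¹ ∘ f ∘ T_{a,b}`, explicitly
`g(x) = ((max(x) − min(x))/(b − a)) • (f(T_{a,b}(x)) − a•1ₘ) + min(x)•1ₘ`. -/
noncomputable def conjugated {n m : ℕ} (hn : 0 < n) (a b : ℝ)
    (f : (Fin n → ℝ) → (Fin m → ℝ)) (x : Fin n → ℝ) : Fin m → ℝ :=
  fun j => (vmax hn x - vmin hn x) / (b - a) * (f (minMaxNormalize hn a b x) j - a)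
    + vmin hn x

lemma vmax_affine {n : ℕ} (hn : 0 < n) (x : Fin n → ℝ) (l μ : ℝ) (hl : 0 < l) :
    vmax hn (fun i => l * x i + μ) = l * vmax hn x + μ := by
  unfold vmax
  apply le_antisymm
  · apply Finset.sup'_le
    intro i _
    have := Finset.le_sup' x (Finset.mem_univ i)
    nlinarith
  · obtain ⟨i, _, hi⟩ := Finset.exists_mem_eq_sup' ⟨⟨0, hn⟩, Finset.mem_univ _⟩ x
    rw [hi]
    exact Finset.le_sup' (f := fun i => l * x i + μ) (Finset.mem_univ i)

lemma vmin_affine {n : ℕ} (hn : 0 < n) (x : Fin n → ℝ) (l μ : ℝ) (hl : 0 < l) :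
    vmin hn (fun i => l * x i + μ) = l * vmin hn x + μ := by
  unfold vmin
  apply le_antisymm
  · obtain ⟨i, _, hi⟩ := Finset.exists_mem_eq_inf' ⟨⟨0, hn⟩, Finset.mem_univ _⟩ x
    rw [hi]
    exact Finset.inf'_le (f := fun i => l * x i + μ) (Finset.mem_univ i)
  · apply Finset.le_inf'
    intro i _
    have := Finset.inf'_le x (Finset.mem_univ i)
    nlinarith

/-- For any `a < b` and any `f : ℝⁿ → ℝᵐ`, the conjugated map `T_{a,b}⁻¹ ∘ f ∘ T_{a,b}`
is normalization-equivariant on nonconstant inputs. -/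
theorem conjugated_normalization_equivariant {n m : ℕ} (hn : 0 < n) (hm : 0 < m)
    (a b : ℝ) (hab : a < b) (f : (Fin n → ℝ) → (Fin m → ℝ))
    (x : Fin n → ℝ) (hx : vmin hn x < vmax hn x) (l μ : ℝ) (hl : 0 < l) :
    conjugated hn a b f (l • x + μ • (fun _ => (1 : ℝ)))
      = l • conjugated hn a b f x + μ • (fun _ => (1 : ℝ)) := by
  have hxy : (l • x + μ • (fun _ => (1 : ℝ))) = fun i => l * x i + μ := by
    funext i; simp
  have hmax := vmax_affine hn x l μ hl
  have hmin := vmin_affine hn x l μ hl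
  have hl0 : l ≠ 0 := ne_of_gt hl
  have hd : vmax hn x - vmin hn x ≠ 0 := ne_of_gt (sub_pos.mpr hx)
  have h2 : -(l * vmin hn x) + l * vmax hn x ≠ 0 := by
    have : -(l * vmin hn x) + l * vmax hn x = l * (vmax hn x - vmin hn x) := by ring
    rw [this]; exact mul_ne_zero hl0 hd
  have hT : minMaxNormalize hn a b (fun i => l * x i + μ)
      = minMaxNormalize hn a b x := by
    funext i
    simp only [minMaxNormalize, hmax, hmin]
    congr 1
    have hd2 : l * vmax hn x + μ - (l * vmin hn x + μ) ≠ 0 := by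
      have : l * vmax hn x + μ - (l * vmin hn x + μ) = l * (vmax hn x - vmin hn x) := by ring
      rw [this]; exact mul_ne_zero hl0 hd
    rw [div_eq_div_iff hd2 hd]
    ring
  funext j
  simp only [conjugated, hxy, hT, hmax, hmin, Pi.add_apply, Pi.smul_apply, smul_eq_mul]
  ring
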